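/- Let p, q, r, s be four distinct points in ℝ² such that the open segments pq and rs cross at a point o, and let μ' be the minimum distance between any pair of points in {p, q, r, s}. If the angle ∠roq is at most π/2, then (|pq| + |rs|) − (|ps| + |rq|) ≥ ((2−√2)/4)·μ'. -/
import Mathlib

open EuclideanGeometry Real

noncomputable section

/-- Points of the Euclidean plane. -/
abbrev Pt : Type := EuclideanSpace ℝ (Fin 2)

private lemma key_sqrt (a d : ℝ) (ha : 0 < a) (hd : 0 < d) :
    Real.sqrt (a ^ 2 + d ^ 2) ≤ a + d - (2 - Real.sqrt 2) * min a d := by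
  have hs2 : Real.sqrt 2 ^ 2 = 2 := Real.sq_sqrt (by norm_num)
  have hs1 : (1 : ℝ) ≤ Real.sqrt 2 := by nlinarith [Real.sqrt_nonneg 2]
  have hsle : Real.sqrt 2 ≤ 2 := by nlinarith [Real.sqrt_nonneg 2]
  rcases le_total a d with h | h
  · rw [min_eq_left h]
    have hnn : 0 ≤ a + d - (2 - Real.sqrt 2) * a := by nlinarith
    have hsq : a ^ 2 + d ^ 2 ≤ (a + d - (2 - Real.sqrt 2) * a) ^ 2 := by
      nlinarith [mul_nonneg (mul_nonneg (by linarith : (0:ℝ) ≤ 2 * Real.sqrt 2 - 2) ha.le)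
        (by linarith : (0:ℝ) ≤ d - a)]
    calc Real.sqrt (a ^ 2 + d ^ 2) ≤ Real.sqrt ((a + d - (2 - Real.sqrt 2) * a) ^ 2) :=
          Real.sqrt_le_sqrt hsq
      _ = a + d - (2 - Real.sqrt 2) * a := by rw [Real.sqrt_sq hnn]
  · rw [min_eq_right h]
    have hnn : 0 ≤ a + d - (2 - Real.sqrt 2) * d := by nlinarith
    have hsq : a ^ 2 + d ^ 2 ≤ (a + d - (2 - Real.sqrt 2) * d) ^ 2 := by
      nlinarith [mul_nonneg (mul_nonneg (by linarith : (0:ℝ) ≤ 2 * Real.sqrt 2 - 2) hd.le)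
        (by linarith : (0:ℝ) ≤ a - d)]
    calc Real.sqrt (a ^ 2 + d ^ 2) ≤ Real.sqrt ((a + d - (2 - Real.sqrt 2) * d) ^ 2) :=
          Real.sqrt_le_sqrt hsq
      _ = a + d - (2 - Real.sqrt 2) * d := by rw [Real.sqrt_sq hnn]

private lemma dist_le_of_cos_nonneg (x y z : Pt) (h : 0 ≤ Real.cos (∠ x y z)) :
    dist x z ≤ Real.sqrt (dist x y ^ 2 + dist z y ^ 2) := by
  have hlaw := EuclideanGeometry.law_cos x y z
  have h1 : dist x z ^ 2 ≤ dist x y ^ 2 + dist z y ^ 2 := by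
    have hnn : 0 ≤ 2 * dist x y * dist z y * Real.cos (∠ x y z) :=
      mul_nonneg (mul_nonneg (mul_nonneg (by norm_num) dist_nonneg) dist_nonneg) h
    nlinarith [hlaw]
  calc dist x z = Real.sqrt (dist x z ^ 2) := (Real.sqrt_sq dist_nonneg).symm
    _ ≤ Real.sqrt (dist x y ^ 2 + dist z y ^ 2) := Real.sqrt_le_sqrt h1

/-- If the open segments `pq` and `rs` (on four distinct points) cross
at `o`, `μ'` is the minimum pairwise distance among `{p, q, r, s}`, and `∠roq ≤ π/2`,
then `(|pq| + |rs|) - (|ps| + |rq|) ≥ ((2 - √2)/4)·μ'`. -/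
theorem stmt1 (p q r s o : Pt)
    (hpq : p ≠ q) (hpr : p ≠ r) (hps : p ≠ s) (hqr : q ≠ r) (hqs : q ≠ s) (hrs : r ≠ s)
    (ho₁ : o ∈ openSegment ℝ p q) (ho₂ : o ∈ openSegment ℝ r s)
    (μ' : ℝ)
    (hμ : μ' = min (dist p q) (min (dist p r) (min (dist p s)
            (min (dist q r) (min (dist q s) (dist r s))))))
    (hangle : ∠ r o q ≤ π / 2) :
    (dist p q + dist r s) - (dist p s + dist r q) ≥ (2 - Real.sqrt 2) / 4 * μ' := by
  have hsb1 : Sbtw ℝ p o q := by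
    rw [sbtw_iff_mem_image_Ioo_and_ne]
    exact ⟨by rwa [← openSegment_eq_image_lineMap], hpq⟩
  have hsb2 : Sbtw ℝ r o s := by
    rw [sbtw_iff_mem_image_Ioo_and_ne]
    exact ⟨by rwa [← openSegment_eq_image_lineMap], hrs⟩
  set a := dist p o with hadef
  set b := dist o q with hbdef
  set c := dist r o with hcdef
  set d := dist o s with hddef
  have hab : a + b = dist p q := dist_add_dist_eq_iff.2 hsb1.wbtw
  have hcd : c + d = dist r s := dist_add_dist_eq_iff.2 hsb2.wbtw
  have ha : 0 < a := dist_pos.2 hsb1.left_ne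
  have hb : 0 < b := dist_pos.2 (Ne.symm hsb1.right_ne)
  have hc : 0 < c := dist_pos.2 hsb2.left_ne
  have hd : 0 < d := dist_pos.2 (Ne.symm hsb2.right_ne)
  have hpi1 : ∠ p o q = π := hsb1.angle₁₂₃_eq_pi
  have hpi2 : ∠ s o r = π := by
    rw [EuclideanGeometry.angle_comm]; exact hsb2.angle₁₂₃_eq_pi
  have hvert : ∠ p o s = ∠ q o r :=
    EuclideanGeometry.angle_eq_angle_of_angle_eq_pi_of_angle_eq_pi hpi1 hpi2
  have hang_nonneg : (0 : ℝ) ≤ ∠ r o q := EuclideanGeometry.angle_nonneg r o q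
  have hcos : 0 ≤ Real.cos (∠ r o q) :=
    Real.cos_nonneg_of_mem_Icc ⟨by linarith [Real.pi_pos], hangle⟩
  have hcos1 : 0 ≤ Real.cos (∠ p o s) := by
    rw [hvert, EuclideanGeometry.angle_comm]; exact hcos
  have hps_le : dist p s ≤ Real.sqrt (a ^ 2 + d ^ 2) := by
    have := dist_le_of_cos_nonneg p o s hcos1
    rwa [dist_comm s o] at this
  have hrq_le : dist r q ≤ Real.sqrt (c ^ 2 + b ^ 2) := by
    have := dist_le_of_cos_nonneg r o q hcos
    rwa [dist_comm q o] at this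
  have k1 := key_sqrt a d ha hd
  have k2 := key_sqrt c b hc hb
  -- μ' is below each pairwise distance we need
  have l1 : μ' ≤ dist p q := by rw [hμ]; exact min_le_left _ _
  have l2 : μ' ≤ dist p r := by
    rw [hμ]; exact le_trans (min_le_right _ _) (min_le_left _ _)
  have l5 : μ' ≤ dist q s := by
    rw [hμ]
    exact le_trans (min_le_right _ _) (le_trans (min_le_right _ _)
      (le_trans (min_le_right _ _) (le_trans (min_le_right _ _) (min_le_left _ _))))
  have l6 : μ' ≤ dist r s := by
    rw [hμ]
    exact le_trans (min_le_right _ _) (le_trans (min_le_right _ _)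
      (le_trans (min_le_right _ _) (le_trans (min_le_right _ _) (min_le_right _ _))))
  have h1 : dist p r ≤ a + c := by
    calc dist p r ≤ dist p o + dist o r := dist_triangle p o r
      _ = a + c := by rw [dist_comm o r]
  have h2 : dist q s ≤ b + d := by
    calc dist q s ≤ dist q o + dist o s := dist_triangle q o s
      _ = b + d := by rw [dist_comm q o]
  have hsum : μ' ≤ min a d + min c b := by
    rcases le_total a d with h | h <;> rcases le_total c b with h' | h'
    · rw [min_eq_left h, min_eq_left h']; linarith
    · rw [min_eq_left h, min_eq_right h']; linarith
    · rw [min_eq_right h, min_eq_left h']; linarith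
    · rw [min_eq_right h, min_eq_right h']; linarith
  have hμnn : 0 ≤ μ' := by rw [hμ]; positivity
  have hs2 : Real.sqrt 2 ^ 2 = 2 := Real.sq_sqrt (by norm_num)
  have hsle : Real.sqrt 2 ≤ 2 := by nlinarith [Real.sqrt_nonneg 2]
  have hsge : (0:ℝ) ≤ 2 - Real.sqrt 2 := by linarith
  have t1 : (2 - Real.sqrt 2) * min a d ≤ a + d - dist p s := by
    have := le_trans hps_le k1; linarith
  have t2 : (2 - Real.sqrt 2) * min c b ≤ c + b - dist r q := by
    have := le_trans hrq_le k2; linarith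
  have hmul : (2 - Real.sqrt 2) * μ' ≤ (2 - Real.sqrt 2) * (min a d + min c b) :=
    mul_le_mul_of_nonneg_left hsum hsge
  have hfrac : (2 - Real.sqrt 2) / 4 * μ' ≤ (2 - Real.sqrt 2) * μ' := by
    apply mul_le_mul_of_nonneg_right _ hμnn
    linarith
  have : (2 - Real.sqrt 2) * (min a d + min c b) ≤
      (a + d - dist p s) + (c + b - dist r q) := by
    rw [mul_add]; exact add_le_add t1 t2
  linarith
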